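/- Let n ≥ 2 be an integer, let E : (0,∞) → ℝ be twice continuously differentiable with E″(ν) ≠ 0 for all ν > 0, and let f, g : (0,∞) → ℝ be continuously differentiable functions satisfying for all ν > 0: ν f′(ν) + n f(ν) + (ν g′(ν) + (n−2) g(ν))/(ν² E″(ν)) − f′(ν)(E′(ν) + ν E″(ν))/E″(ν) = 0 and g′(ν) − (E′(ν) + ν E″(ν))(ν g′(ν) + (n−2) g(ν))/(ν² E″(ν)) + f′(ν)/E″(ν) = 0. Let φ : ℝ² → ℝ be twice continuously differentiable and v₊, v₋ : ℝ² → ℝ continuously differentiable with v₊(σ)v₋(σ) > 0 for all σ ∈ ℝ², and suppose the equations of motion ∂₊∂₋φ + ∂₋v₊ + ∂₊v₋ = 0, (1+E′(v₊v₋))v₋ + ∂₋φ = 0, and (1+E′(v₊v₋))v₊ + ∂₊φ = 0 hold everywhere on ℝ². Then the spin-n current is conserved: ∂₋( f(v₊v₋) · v₊ⁿ ) + ∂₊( g(v₊v₋) · v₊ⁿ⁻² ) = 0 everywhere on ℝ². -/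

import Mathlib

/-- Light-cone partial derivative `∂₊` on the worldsheet `ℝ²`. -/
noncomputable def dplus (h : ℝ × ℝ → ℝ) (p : ℝ × ℝ) : ℝ := fderiv ℝ h p (1, 0)

/-- Light-cone partial derivative `∂₋` on the worldsheet `ℝ²`. -/
noncomputable def dminus (h : ℝ × ℝ → ℝ) (p : ℝ × ℝ) : ℝ := fderiv ℝ h p (0, 1)

/-- If `(f, g)` solve the conservation ODE system for the auxiliary-field free
boson with interaction function `E`, then on-shell the spin-`n` current
`τ₊ₙ = f(ν)v₊ⁿ`, `θ₊₍ₙ₋₂₎ = g(ν)v₊ⁿ⁻²` (with `ν = v₊v₋`) is conserved. -/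
theorem stmt3 (n : ℕ) (hn : 2 ≤ n) (E f g : ℝ → ℝ)
    (hE : ContDiffOn ℝ 2 E (Set.Ioi 0))
    (hE'' : ∀ ν > (0 : ℝ), deriv (deriv E) ν ≠ 0)
    (hf : ContDiffOn ℝ 1 f (Set.Ioi 0)) (hg : ContDiffOn ℝ 1 g (Set.Ioi 0))
    (hode1 : ∀ ν > (0 : ℝ),
      ν * deriv f ν + (n : ℝ) * f ν
        + (ν * deriv g ν + ((n : ℝ) - 2) * g ν) / (ν ^ 2 * deriv (deriv E) ν)
        - deriv f ν * (deriv E ν + ν * deriv (deriv E) ν) / deriv (deriv E) ν = 0)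
    (hode2 : ∀ ν > (0 : ℝ),
      deriv g ν
        - (deriv E ν + ν * deriv (deriv E) ν)
            * (ν * deriv g ν + ((n : ℝ) - 2) * g ν) / (ν ^ 2 * deriv (deriv E) ν)
        + deriv f ν / deriv (deriv E) ν = 0)
    (φ vp vm : ℝ × ℝ → ℝ)
    (hφ : ContDiff ℝ 2 φ) (hvp : ContDiff ℝ 1 vp) (hvm : ContDiff ℝ 1 vm)
    (hpos : ∀ p : ℝ × ℝ, 0 < vp p * vm p)
    (heom1 : ∀ p : ℝ × ℝ,
      dplus (fun q => dminus φ q) p + dminus vp p + dplus vm p = 0)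
    (heom2 : ∀ p : ℝ × ℝ,
      (1 + deriv E (vp p * vm p)) * vm p + dminus φ p = 0)
    (heom3 : ∀ p : ℝ × ℝ,
      (1 + deriv E (vp p * vm p)) * vp p + dplus φ p = 0) :
    ∀ p : ℝ × ℝ,
      dminus (fun q => f (vp q * vm q) * vp q ^ n) p
        + dplus (fun q => g (vp q * vm q) * vp q ^ (n - 2)) p = 0 := by
  have hE'cd : ContDiffOn ℝ 1 (deriv E) (Set.Ioi 0) :=
    hE.deriv_of_isOpen isOpen_Ioi (by norm_num)
  have hE'diff : ∀ x > (0:ℝ), HasDerivAt (deriv E) (deriv (deriv E) x) x := fun x hx =>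
    ((hE'cd.differentiableOn one_ne_zero).differentiableAt (Ioi_mem_nhds hx)).hasDerivAt
  have hfdiff : ∀ x > (0:ℝ), HasDerivAt f (deriv f x) x := fun x hx =>
    ((hf.differentiableOn one_ne_zero).differentiableAt (Ioi_mem_nhds hx)).hasDerivAt
  have hgdiff : ∀ x > (0:ℝ), HasDerivAt g (deriv g x) x := fun x hx =>
    ((hg.differentiableOn one_ne_zero).differentiableAt (Ioi_mem_nhds hx)).hasDerivAt
  obtain ⟨m, rfl⟩ : ∃ m, n = m + 2 := ⟨n - 2, by omega⟩
  intro p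
  have hν : 0 < vp p * vm p := hpos p
  have hP : vp p ≠ 0 := by rintro h; rw [h, zero_mul] at hν; exact lt_irrefl 0 hν
  have hM : vm p ≠ 0 := by rintro h; rw [h, mul_zero] at hν; exact lt_irrefl 0 hν
  have he2 : deriv (deriv E) (vp p * vm p) ≠ 0 := hE'' _ hν
  -- fderivs of vp, vm, ν
  have hvpd : HasFDerivAt vp (fderiv ℝ vp p) p :=
    (hvp.differentiable one_ne_zero p).hasFDerivAt
  have hvmd : HasFDerivAt vm (fderiv ℝ vm p) p :=
    (hvm.differentiable one_ne_zero p).hasFDerivAt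
  set Dp := fderiv ℝ vp p with hDp
  set Dm := fderiv ℝ vm p with hDm
  have hνd : HasFDerivAt (fun q => vp q * vm q) (vp p • Dm + vm p • Dp) p :=
    hvpd.mul hvmd
  set Dν := vp p • Dm + vm p • Dp with hDν
  -- second derivative of φ
  have hφ1 : ContDiff ℝ 1 (fderiv ℝ φ) := hφ.fderiv_right (by norm_num)
  have hBd : HasFDerivAt (fderiv ℝ φ) (fderiv ℝ (fderiv ℝ φ) p) p :=
    (hφ1.differentiable one_ne_zero p).hasFDerivAt
  set B := fderiv ℝ (fderiv ℝ φ) p with hB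
  have hsym : ∀ v w, B v w = B w v := hφ.contDiffAt.isSymmSndFDerivAt (by norm_num)
  have hdmφ : HasFDerivAt (fun q => dminus φ q) (B.flip (0,1)) p := by
    have h := hBd.clm_apply (hasFDerivAt_const ((0:ℝ),(1:ℝ)) p)
    simpa [dminus] using h
  have hdpφ : HasFDerivAt (fun q => dplus φ q) (B.flip (1,0)) p := by
    have h := hBd.clm_apply (hasFDerivAt_const ((1:ℝ),(0:ℝ)) p)
    simpa [dplus] using h
  -- chain rule for deriv E ∘ ν
  have hEν : HasFDerivAt (fun q => deriv E (vp q * vm q))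
      (deriv (deriv E) (vp p * vm p) • Dν) p := by
    have := (hE'diff _ hν).comp_hasFDerivAt p hνd
    simpa [Function.comp_def] using this
  set e1 := deriv E (vp p * vm p) with he1d
  set e2 := deriv (deriv E) (vp p * vm p) with he2d
  -- differentiate EOM2 (gives eq. B)
  have hL2 : HasFDerivAt (fun q => (1 + deriv E (vp q * vm q)) * vm q + dminus φ q)
      (((1 + e1) • Dm + vm p • (e2 • Dν)) + B.flip (0,1)) p :=
    ((hEν.const_add 1).mul hvmd).add hdmφ
  have hz2 : (((1 + e1) • Dm + vm p • (e2 • Dν)) + B.flip (0,1)) = 0 := by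
    refine hL2.unique ?_
    have hfn : (fun q => (1 + deriv E (vp q * vm q)) * vm q + dminus φ q)
        = fun _ => (0:ℝ) := funext heom2
    rw [hfn]; exact hasFDerivAt_const 0 p
  have eq2 : (1 + e1) * Dm (1,0) + vm p * (e2 * Dν (1,0)) + B (1,0) (0,1) = 0 := by
    have h := DFunLike.congr_fun hz2 ((1:ℝ),(0:ℝ))
    simpa using h
  -- differentiate EOM3 (gives eq. A)
  have hL3 : HasFDerivAt (fun q => (1 + deriv E (vp q * vm q)) * vp q + dplus φ q)
      (((1 + e1) • Dp + vp p • (e2 • Dν)) + B.flip (1,0)) p :=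
    ((hEν.const_add 1).mul hvpd).add hdpφ
  have hz3 : (((1 + e1) • Dp + vp p • (e2 • Dν)) + B.flip (1,0)) = 0 := by
    refine hL3.unique ?_
    have hfn : (fun q => (1 + deriv E (vp q * vm q)) * vp q + dplus φ q)
        = fun _ => (0:ℝ) := funext heom3
    rw [hfn]; exact hasFDerivAt_const 0 p
  have eq3 : (1 + e1) * Dp (0,1) + vp p * (e2 * Dν (0,1)) + B (0,1) (1,0) = 0 := by
    have h := DFunLike.congr_fun hz3 ((0:ℝ),(1:ℝ))
    simpa using h
  -- EOM1 rewritten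
  have eqE1 : B (1,0) (0,1) + Dp (0,1) + Dm (1,0) = 0 := by
    have h := heom1 p
    rw [show dplus (fun q => dminus φ q) p
        = fderiv ℝ (fun q => fderiv ℝ φ q (0,1)) p (1,0) from rfl] at h
    rw [show (fun q => fderiv ℝ φ q ((0:ℝ),(1:ℝ))) = (fun q => dminus φ q) from rfl,
      hdmφ.fderiv] at h
    simpa [dminus, dplus] using h
    -- target current derivatives
  have hfν : HasFDerivAt (fun q => f (vp q * vm q)) (deriv f (vp p * vm p) • Dν) p := by
    have := (hfdiff _ hν).comp_hasFDerivAt p hνd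
    simpa [Function.comp_def] using this
  have hgν : HasFDerivAt (fun q => g (vp q * vm q)) (deriv g (vp p * vm p) • Dν) p := by
    have := (hgdiff _ hν).comp_hasFDerivAt p hνd
    simpa [Function.comp_def] using this
  have hpow1 : HasFDerivAt (fun q => vp q ^ (m+2))
      ((((m:ℝ)+2) * vp p ^ (m+1)) • Dp) p := by
    have := (hasDerivAt_pow (m+2) (vp p)).comp_hasFDerivAt p hvpd
    simpa [Function.comp_def, Nat.add_sub_cancel] using this
  have hpow2 : HasFDerivAt (fun q => vp q ^ m)
      (((m:ℝ) * vp p ^ (m-1)) • Dp) p := by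
    have := (hasDerivAt_pow m (vp p)).comp_hasFDerivAt p hvpd
    simpa [Function.comp_def] using this
  have hT1 : HasFDerivAt (fun q => f (vp q * vm q) * vp q ^ (m+2)) _ p := hfν.mul hpow1
  have hT2 : HasFDerivAt (fun q => g (vp q * vm q) * vp q ^ m) _ p := hgν.mul hpow2
  simp only [Nat.add_sub_cancel]
  rw [dminus, dplus, hT1.fderiv, hT2.fderiv]
  simp only [ContinuousLinearMap.add_apply, ContinuousLinearMap.coe_smul',
    Pi.smul_apply, smul_eq_mul, hDν]
  -- algebraic forms of the differentiated equations of motion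
  simp only [hDν, ContinuousLinearMap.add_apply, ContinuousLinearMap.coe_smul',
    Pi.smul_apply, smul_eq_mul] at eq2 eq3
  have hA : e1 * Dp (0,1) + e2 * vp p * (vp p * Dm (0,1) + vm p * Dp (0,1))
      = Dm (1,0) := by
    linear_combination eq3 - eqE1 - hsym ((0:ℝ),(1:ℝ)) ((1:ℝ),(0:ℝ))
  have hB2 : e1 * Dm (1,0) + e2 * vm p * (vp p * Dm (1,0) + vm p * Dp (1,0))
      = Dp (0,1) := by
    linear_combination eq2 - eqE1
  -- polynomial forms of the ODEs
  have h1 := hode1 _ hν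
  have h2 := hode2 _ hν

  have he2' : deriv (deriv E) (vp p * vm p) ≠ 0 := he2
  field_simp at h1 h2
  rcases m with _ | k
  · -- n = 2
    push_cast at h1 h2 ⊢
    refine mul_left_cancel₀
      (a := e2^2 * (vm p)^2 * (vp p * vm p)^2 * vp p) ?_ ?_
    · exact mul_ne_zero (mul_ne_zero (mul_ne_zero (pow_ne_zero 2 he2)
        (pow_ne_zero 2 hM)) (pow_ne_zero 2 (ne_of_gt hν))) hP
    · linear_combination
        (e2 * (vp p^2 * Dp (0,1) * vm p^2)) * h1
        + (e2 * (vp p^2 * Dm (1,0) * vm p^2)) * h2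
        + (e2 * deriv f (vp p * vm p) * vp p^2 * vm p^2 * (vp p * vm p)^2) * hA
        + (e2 * deriv g (vp p * vm p) * vp p * vm p * (vp p * vm p)^2) * hB2
  · -- n = k + 3
    simp only [Nat.add_sub_cancel]
    push_cast at h1 h2 ⊢
    refine mul_left_cancel₀ (a := e2^2 * (vm p)^2 * (vp p * vm p)^2) ?_ ?_
    · exact mul_ne_zero (mul_ne_zero (pow_ne_zero 2 he2) (pow_ne_zero 2 hM))
        (pow_ne_zero 2 (ne_of_gt hν))
    · linear_combination
        (e2 * (vp p^(k+2) * Dp (0,1) * vm p^2)) * h1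
        + (e2 * (vp p^(k+2) * Dm (1,0) * vm p^2)) * h2
        + (e2 * deriv f (vp p * vm p) * vp p^(k+2) * vm p^2 * (vp p * vm p)^2) * hA
        + (e2 * (deriv g (vp p * vm p) * vp p^(k+1) * vm p
            + ((k:ℝ)+1) * vp p^k * g (vp p * vm p)) * (vp p * vm p)^2) * hB2
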